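/- Let d ≥ 2, r > 0, σ > 0, let 0 ≤ ε_tr < r/2 and 0 ≤ ε_te < r/2, and let D = {(x_i, y_i)}_{i=1}^n ⊂ ℝ^d × {−1,+1} satisfy (x_i)_1 = y_i·r/2 with induced dataset linearly separable with margin γ̃ > 0. Then the ε_te-robust accuracy of the ε_tr-robust max-ℓ2-margin solution θ̂^{ε_tr} (with respect to the signal-directed perturbation sets) on P_r equals Φ((r − 2ε_tr)(r − 2ε_te)/(4σγ̃)), i.e. P_{(X,Y)∼P_r}[min_{x' ∈ S_{ε_te}(X)} Y·(θ̂^{ε_tr})ᵀx' > 0] = Φ(r(r − 2ε_te)/(4σγ̃) − ε_tr(r − 2ε_te)/(2σγ̃)). -/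

import Mathlib

open MeasureTheory ProbabilityTheory Real Set
open scoped ENNReal BigOperators

noncomputable section

/-- Euclidean dot product on `Fin d → ℝ`. -/
def dot {d : ℕ} (u v : Fin d → ℝ) : ℝ := ∑ j, u j * v j

/-- Euclidean (`ℓ2`) norm on `Fin d → ℝ`. -/
def norm2 {d : ℕ} (u : Fin d → ℝ) : ℝ := Real.sqrt (∑ j, (u j) ^ 2)

/-- The (minimum) margin of the linear classifier `θ` on the dataset `{(x i, y i)}`. -/
def margin {d n : ℕ} (x : Fin n → Fin d → ℝ) (y : Fin n → ℝ) (θ : Fin d → ℝ) : ℝ :=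
  ⨅ i, y i * dot θ (x i)

/-- The worst-case (robust) margin of `θ` on the dataset, with respect to the
signal-directed perturbation sets `S_ε(x) = {x + β • e₁ : |β| ≤ ε}`. -/
def robustMargin {m n : ℕ} (ε : ℝ) (x : Fin n → Fin (m + 1) → ℝ) (y : Fin n → ℝ)
    (θ : Fin (m + 1) → ℝ) : ℝ :=
  ⨅ i, ⨅ β : {b : ℝ // |b| ≤ ε}, y i * dot θ (x i + β.1 • (Pi.single 0 1 : Fin (m + 1) → ℝ))

/-- The isotropic Gaussian measure `N(0, σ² I_m)` on `ℝ^m`. -/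
def gaussPi (m : ℕ) (σ : ℝ) : Measure (Fin m → ℝ) :=
  Measure.pi fun _ => gaussianReal 0 (Real.toNNReal (σ ^ 2))

/-- The data distribution `P_r` on `ℝ^{m+1} × {±1}`: the label `Y` is uniform on `{±1}`
and the covariate is `X = (Y · r/2, X̃)` with `X̃ ~ N(0, σ² I_m)`. -/
def Pdist (m : ℕ) (r σ : ℝ) : Measure ((Fin (m + 1) → ℝ) × ℝ) :=
  (2⁻¹ : ℝ≥0∞) • (gaussPi m σ).map (fun xt => ((Fin.cons (r / 2) xt : Fin (m + 1) → ℝ), (1 : ℝ)))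
    + (2⁻¹ : ℝ≥0∞) • (gaussPi m σ).map
        (fun xt => ((Fin.cons (-(r / 2)) xt : Fin (m + 1) → ℝ), (-1 : ℝ)))

/-- The standard normal cumulative distribution function `Φ`. -/
def stdGaussianCDF (z : ℝ) : ℝ := ((gaussianReal 0 1) (Iic z)).toReal

/-! ### Auxiliary lemmas -/

section Aux

open Function
open scoped NNReal

lemma iInf_beta (ε c k : ℝ) (hε : 0 ≤ ε) :
    ⨅ β : {b : ℝ // |b| ≤ ε}, (c + β.1 * k) = c - ε * |k| := by
  have hne : Nonempty {b : ℝ // |b| ≤ ε} := ⟨⟨0, by simpa using hε⟩⟩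
  have hlb : ∀ β : {b : ℝ // |b| ≤ ε}, c - ε * |k| ≤ c + β.1 * k := by
    intro β
    have h1 : -(ε * |k|) ≤ β.1 * k := by
      have := abs_mul β.1 k
      nlinarith [neg_abs_le (β.1 * k), abs_nonneg k, β.2, abs_nonneg β.1]
    linarith
  have hbdd : BddBelow (Set.range fun β : {b : ℝ // |b| ≤ ε} => c + β.1 * k) :=
    ⟨c - ε * |k|, by rintro z ⟨β, rfl⟩; exact hlb β⟩
  refine le_antisymm ?_ (le_ciInf hlb)
  rcases le_or_gt 0 k with h | h
  · have := ciInf_le hbdd (⟨-ε, by simp [abs_of_nonneg hε]⟩ : {b : ℝ // |b| ≤ ε})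
    refine this.trans_eq ?_
    rw [abs_of_nonneg h]; ring
  · have := ciInf_le hbdd (⟨ε, by simp [abs_of_nonneg hε]⟩ : {b : ℝ // |b| ≤ ε})
    refine this.trans_eq ?_
    rw [abs_of_neg h]; ring

lemma fin_ciInf_eq {n : ℕ} (f : Fin n → ℝ) (i0 : Fin n) (h : ∀ j, f i0 ≤ f j) :
    ⨅ i, f i = f i0 := by
  haveI : Nonempty (Fin n) := ⟨i0⟩
  exact le_antisymm (ciInf_le (Set.finite_range f).bddBelow i0) (le_ciInf h)

lemma fin_ciInf_add_const {n : ℕ} (hn : 0 < n) (f : Fin n → ℝ) (c : ℝ) :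
    ⨅ i, (f i + c) = (⨅ i, f i) + c := by
  haveI : Nonempty (Fin n) := ⟨⟨0, hn⟩⟩
  obtain ⟨i0, hi0⟩ := Finite.exists_min f
  rw [fin_ciInf_eq f i0 hi0, fin_ciInf_eq (fun i => f i + c) i0 (fun j => by
    show f i0 + c ≤ f j + c; linarith [hi0 j])]

lemma dot_add_smul_single {m : ℕ} (θ u : Fin (m+1) → ℝ) (b : ℝ) :
    dot θ (u + b • (Pi.single 0 1 : Fin (m+1) → ℝ)) = dot θ u + b * θ 0 := by
  have h : ∀ j : Fin (m+1), θ j * (u j + b * (Pi.single 0 1 : Fin (m+1) → ℝ) j)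
      = θ j * u j + θ j * b * (Pi.single 0 1 : Fin (m+1) → ℝ) j := fun j => by ring
  simp only [dot, Pi.add_apply, Pi.smul_apply, smul_eq_mul, h, Finset.sum_add_distrib]
  congr 1
  rw [Finset.sum_eq_single 0]
  · simp [Pi.single_eq_same]; ring
  · intro j _ hj; simp [Pi.single_eq_of_ne hj]
  · simp

lemma dot_decomp {m : ℕ} (θ v : Fin (m+1) → ℝ) :
    dot θ v = θ 0 * v 0 + dot (Fin.tail θ) (Fin.tail v) := by
  simp [dot, Fin.sum_univ_succ, Fin.tail]

lemma dot_smul {d : ℕ} (c : ℝ) (θ v : Fin d → ℝ) : dot (c • θ) v = c * dot θ v := by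
  simp [dot, Finset.mul_sum, mul_assoc]

lemma norm2_nonneg {d : ℕ} (u : Fin d → ℝ) : 0 ≤ norm2 u := Real.sqrt_nonneg _

lemma norm2_smul {d : ℕ} (c : ℝ) (u : Fin d → ℝ) : norm2 (c • u) = |c| * norm2 u := by
  simp only [norm2, Pi.smul_apply, smul_eq_mul, mul_pow]
  rw [← Finset.mul_sum, Real.sqrt_mul (sq_nonneg c), Real.sqrt_sq_eq_abs]

lemma sq_norm2 {d : ℕ} (u : Fin d → ℝ) : (norm2 u) ^ 2 = ∑ j, (u j) ^ 2 :=
  Real.sq_sqrt (Finset.sum_nonneg fun j _ => sq_nonneg _)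

lemma norm2_eq_zero {d : ℕ} (u : Fin d → ℝ) (h : norm2 u = 0) : u = 0 := by
  have h2 : ∑ j, (u j)^2 = 0 := by
    have := sq_norm2 u; rw [h] at this; simpa using this.symm
  have := (Finset.sum_eq_zero_iff_of_nonneg (fun j _ => sq_nonneg (u j))).mp h2
  funext j
  simpa using pow_eq_zero_iff (n := 2) (by norm_num) |>.mp (this j (Finset.mem_univ j))

lemma margin_smul {d n : ℕ} (x : Fin n → Fin d → ℝ) (y : Fin n → ℝ) (θ : Fin d → ℝ)
    (c : ℝ) (hc : 0 ≤ c) : margin x y (c • θ) = c * margin x y θ := by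
  simp only [margin, dot_smul]
  rw [Real.mul_iInf_of_nonneg hc]
  congr 1; funext i; ring

lemma pdf_conv (v₁ v₂ : ℝ≥0) (h₁ : v₁ ≠ 0) (h₂ : v₂ ≠ 0) (z x : ℝ) :
    gaussianPDFReal 0 v₁ x * gaussianPDFReal 0 v₂ (z - x)
      = gaussianPDFReal 0 (v₁ + v₂) z
        * gaussianPDFReal (z * (v₁:ℝ) / ((v₁:ℝ) + (v₂:ℝ))) (v₁ * v₂ / (v₁ + v₂)) x := by
  have ha : 0 < (v₁:ℝ) := NNReal.coe_pos.mpr (pos_iff_ne_zero.mpr h₁)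
  have hb : 0 < (v₂:ℝ) := NNReal.coe_pos.mpr (pos_iff_ne_zero.mpr h₂)
  simp only [gaussianPDFReal, NNReal.coe_add, NNReal.coe_div, NNReal.coe_mul, sub_zero]
  set a := (v₁:ℝ) with hadef
  set b := (v₂:ℝ) with hbdef
  have hab : 0 < a + b := by linarith
  have hc : (√(2*π*a))⁻¹ * (√(2*π*b))⁻¹ = (√(2*π*(a+b)))⁻¹ * (√(2*π*(a*b/(a+b))))⁻¹ := by
    rw [← mul_inv, ← mul_inv, ← Real.sqrt_mul (by positivity), ← Real.sqrt_mul (by positivity)]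
    have harg : 2*π*a * (2*π*b) = 2*π*(a+b) * (2*π*(a*b/(a+b))) := by
      field_simp
    rw [harg]
  have he : -x^2/(2*a) + -(z - x)^2/(2*b)
      = -z^2/(2*(a+b)) + -(x - z*a/(a+b))^2/(2*(a*b/(a+b))) := by
    field_simp; ring
  rw [mul_mul_mul_comm, ← Real.exp_add, he, Real.exp_add, hc, mul_mul_mul_comm]

lemma gaussian_sum (v₁ v₂ : ℝ≥0) :
    ((gaussianReal 0 v₁).prod (gaussianReal 0 v₂)).map (fun p => p.1 + p.2)
      = gaussianReal 0 (v₁ + v₂) := by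
  by_cases h₁ : v₁ = 0
  · subst h₁
    rw [gaussianReal_zero_var, Measure.dirac_prod,
      Measure.map_map (g := fun p : ℝ × ℝ => p.1 + p.2) (measurable_fst.add measurable_snd) measurable_prodMk_left]
    have : ((fun p : ℝ × ℝ => p.1 + p.2) ∘ Prod.mk (0:ℝ)) = id := by
      funext y; simp
    rw [this, Measure.map_id, zero_add]
  by_cases h₂ : v₂ = 0
  · subst h₂
    rw [gaussianReal_zero_var, Measure.prod_dirac,
      Measure.map_map (g := fun p : ℝ × ℝ => p.1 + p.2) (measurable_fst.add measurable_snd) measurable_prodMk_right]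
    have : ((fun p : ℝ × ℝ => p.1 + p.2) ∘ (fun x : ℝ => (x, (0:ℝ)))) = id := by
      funext y; simp
    rw [this, Measure.map_id, add_zero]
  have h₁₂ : v₁ + v₂ ≠ 0 := by simp [h₁, h₂]
  have hv' : v₁ * v₂ / (v₁ + v₂) ≠ 0 := by
    simp [div_eq_zero_iff, mul_eq_zero, h₁, h₂, h₁₂]
  ext s hs
  rw [Measure.map_apply (f := fun p : ℝ × ℝ => p.1 + p.2) (measurable_fst.add measurable_snd) hs,
    Measure.prod_apply (s := (fun p : ℝ × ℝ => p.1 + p.2) ⁻¹' s) ((measurable_fst.add measurable_snd) hs)]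
  have hinner : ∀ x : ℝ, gaussianReal 0 v₂ (Prod.mk x ⁻¹' ((fun p : ℝ × ℝ => p.1 + p.2) ⁻¹' s))
      = ∫⁻ z in s, ENNReal.ofReal (gaussianPDFReal 0 v₂ (z - x)) := by
    intro x
    have hpre : (Prod.mk x ⁻¹' ((fun p : ℝ × ℝ => p.1 + p.2) ⁻¹' s)) = (fun y => x + y) ⁻¹' s := rfl
    rw [hpre, ← Measure.map_apply (measurable_const_add x) hs, gaussianReal_map_const_add,
      zero_add, gaussianReal_apply _ h₂ s]
    congr 1
    funext z
    rw [gaussianPDF]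
    congr 1
    simp only [gaussianPDFReal]
    ring_nf
  simp_rw [hinner]
  rw [gaussianReal_of_var_ne_zero _ h₁]
  have hGmeas : Measurable (uncurry fun x z : ℝ =>
      ENNReal.ofReal (gaussianPDFReal 0 v₁ x * gaussianPDFReal 0 v₂ (z - x))) := by
    apply Measurable.ennreal_ofReal
    exact ((measurable_gaussianPDFReal 0 v₁).comp measurable_fst).mul
      ((measurable_gaussianPDFReal 0 v₂).comp (measurable_snd.sub measurable_fst))
  have hFmeas : Measurable fun x : ℝ =>
      ∫⁻ z in s, ENNReal.ofReal (gaussianPDFReal 0 v₂ (z - x)) := by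
    apply Measurable.lintegral_prod_right'
      (f := fun p : ℝ × ℝ => ENNReal.ofReal (gaussianPDFReal 0 v₂ (p.2 - p.1)))
    exact ((measurable_gaussianPDFReal 0 v₂).comp
      (measurable_snd.sub measurable_fst)).ennreal_ofReal
  rw [lintegral_withDensity_eq_lintegral_mul _ (measurable_gaussianPDF 0 v₁) hFmeas]
  have step1 : ∀ x : ℝ, (gaussianPDF 0 v₁ * fun x =>
        ∫⁻ z in s, ENNReal.ofReal (gaussianPDFReal 0 v₂ (z - x))) x
      = ∫⁻ z in s, ENNReal.ofReal (gaussianPDFReal 0 v₁ x * gaussianPDFReal 0 v₂ (z - x)) := by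
    intro x
    simp only [Pi.mul_apply, gaussianPDF]
    rw [← lintegral_const_mul' _ _ ENNReal.ofReal_ne_top]
    congr 1
    funext z
    rw [← ENNReal.ofReal_mul (gaussianPDFReal_nonneg _ _ _)]
  simp_rw [step1]
  rw [lintegral_lintegral_swap hGmeas.aemeasurable]
  have key : ∀ z : ℝ, ∫⁻ x, ENNReal.ofReal (gaussianPDFReal 0 v₁ x * gaussianPDFReal 0 v₂ (z - x))
      = gaussianPDF 0 (v₁ + v₂) z := by
    intro z
    have hz : ∀ x : ℝ, ENNReal.ofReal (gaussianPDFReal 0 v₁ x * gaussianPDFReal 0 v₂ (z - x))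
        = ENNReal.ofReal (gaussianPDFReal 0 (v₁ + v₂) z)
          * gaussianPDF (z * (v₁:ℝ) / ((v₁:ℝ) + (v₂:ℝ))) (v₁ * v₂ / (v₁ + v₂)) x := by
      intro x
      rw [pdf_conv v₁ v₂ h₁ h₂ z x, ENNReal.ofReal_mul (gaussianPDFReal_nonneg _ _ _)]
      rfl
    simp_rw [hz]
    rw [lintegral_const_mul' _ _ ENNReal.ofReal_ne_top, lintegral_gaussianPDF_eq_one _ hv',
      mul_one]
    rfl
  rw [lintegral_congr key, gaussianReal_apply _ h₁₂ s]

instance gaussPi_isProb (m : ℕ) (σ : ℝ) : IsProbabilityMeasure (gaussPi m σ) := by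
  unfold gaussPi; infer_instance

lemma gaussPi_map_linear (σ : ℝ) (m : ℕ) (w : Fin m → ℝ) :
    (gaussPi m σ).map (fun xt => ∑ j, w j * xt j)
      = gaussianReal 0 (Real.toNNReal (σ^2 * ∑ j, (w j)^2)) := by
  induction m with
  | zero =>
      have : (fun xt : Fin 0 → ℝ => ∑ j, w j * xt j) = fun _ => (0:ℝ) := by
        funext xt; simp
      rw [this, Measure.map_const, measure_univ, one_smul]
      simp [gaussianReal_zero_var]
  | succ m ih =>
      set e := MeasurableEquiv.piFinSuccAbove (fun _ : Fin (m+1) => ℝ) 0 with hedef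
      have hmp := measurePreserving_piFinSuccAbove
        (fun _ : Fin (m+1) => gaussianReal 0 (Real.toNNReal (σ^2))) 0
      have hmap_e : (gaussPi (m+1) σ).map e
          = (gaussianReal 0 (Real.toNNReal (σ^2))).prod (gaussPi m σ) := hmp.map_eq
      set g : ℝ × (Fin m → ℝ) → ℝ := fun p => w 0 * p.1 + ∑ j, w (j.succ) * p.2 j with hgdef
      have hg : Measurable g := by
        apply Measurable.add
        · exact (measurable_fst).const_mul _
        · exact Finset.measurable_sum _ fun j _ =>
            ((measurable_pi_apply j).comp measurable_snd).const_mul _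
      have hcomp : (fun xt : Fin (m+1) → ℝ => ∑ j, w j * xt j) = g ∘ e := by
        funext xt
        show _ = w 0 * xt 0 + ∑ j, w (j.succ) * xt ((0 : Fin (m+1)).succAbove j)
        simp [Fin.sum_univ_succ, Fin.zero_succAbove]
      rw [hcomp, ← Measure.map_map hg e.measurable, hmap_e]
      have hsplit : g = (fun q : ℝ × ℝ => q.1 + q.2)
          ∘ Prod.map (fun a : ℝ => w 0 * a) (fun xt : Fin m → ℝ => ∑ j, w (j.succ) * xt j) := rfl
      have hw0 : Measurable (fun a : ℝ => w 0 * a) := by fun_prop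
      have hL : Measurable (fun xt : Fin m → ℝ => ∑ j, w (j.succ) * xt j) :=
        Finset.measurable_sum _ fun j _ => (measurable_pi_apply j).const_mul _
      rw [hsplit, ← Measure.map_map (g := fun q : ℝ × ℝ => q.1 + q.2) (measurable_fst.add measurable_snd) (hw0.prodMap hL),
        ← Measure.map_prod_map _ _ hw0 hL, ih (fun j => w j.succ)]
      have hmul : (gaussianReal 0 (Real.toNNReal (σ^2))).map (fun a : ℝ => w 0 * a)
          = gaussianReal 0 (NNReal.mk ((w 0)^2) (sq_nonneg _) * Real.toNNReal (σ^2)) := by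
        have := gaussianReal_map_const_mul (μ := 0) (v := Real.toNNReal (σ^2)) (w 0)
        simpa using this
      rw [hmul, gaussian_sum]
      congr 1
      apply NNReal.coe_injective
      push_cast
      rw [Real.coe_toNNReal _ (by positivity), Real.coe_toNNReal _ (by positivity),
        Real.coe_toNNReal _ (by positivity)]
      rw [Fin.sum_univ_succ]
      ring

end Aux

set_option maxHeartbeats 2000000 in
/-- For a dataset with first covariate coordinate `y_i · r/2` whose induced
dataset has maximum `ℓ2`-margin `γ̃ > 0`, the `ε_te`-robust accuracy on `P_r` (signal-directed
perturbations) of any unit-norm `ε_tr`-robust max-`ℓ2`-margin solution `θ̂^{ε_tr}` equals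
`Φ(r(r − 2ε_te)/(4σγ̃) − ε_tr(r − 2ε_te)/(2σγ̃))`. -/
theorem robust_accuracy_of_robust_max_margin
    {m n : ℕ} (hm : 1 ≤ m) (hn : 0 < n) (r σ εtr εte : ℝ) (hr : 0 < r) (hσ : 0 < σ)
    (hεtr : 0 ≤ εtr) (hεtr2 : εtr < r / 2) (hεte : 0 ≤ εte) (hεte2 : εte < r / 2)
    (x : Fin n → Fin (m + 1) → ℝ) (y : Fin n → ℝ)
    (hy : ∀ i, y i = 1 ∨ y i = -1)
    (hx1 : ∀ i, x i 0 = y i * (r / 2))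
    (γt : ℝ) (hγt_pos : 0 < γt)
    (hγt : IsGreatest
      {c | ∃ θt : Fin m → ℝ, norm2 θt ≤ 1 ∧ c = margin (fun i => Fin.tail (x i)) y θt} γt)
    (θhat : Fin (m + 1) → ℝ) (hθhat_norm : norm2 θhat = 1)
    (hθhat_max : ∀ θ : Fin (m + 1) → ℝ, norm2 θ ≤ 1 →
      robustMargin εtr x y θ ≤ robustMargin εtr x y θhat) :
    ((Pdist m r σ) {p | 0 < ⨅ β : {b : ℝ // |b| ≤ εte},
        p.2 * dot θhat (p.1 + β.1 • (Pi.single 0 1 : Fin (m + 1) → ℝ))}).toReal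
      = stdGaussianCDF (r * (r - 2 * εte) / (4 * σ * γt)
          - εtr * (r - 2 * εte) / (2 * σ * γt)) := by
  haveI : Nonempty (Fin n) := ⟨⟨0, hn⟩⟩
  set u : ℝ := r / 2 - εtr with hudef
  have hu : 0 < u := by simp only [hudef]; linarith
  set M : ℝ := Real.sqrt (u^2 + γt^2) with hMdef
  have hM : 0 < M := Real.sqrt_pos.mpr (by positivity)
  have hM2 : M^2 = u^2 + γt^2 := Real.sq_sqrt (by positivity)
  have hy1 : ∀ i, |y i| = 1 := fun i => by rcases hy i with h | h <;> simp [h]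
  -- decomposition of the robust margin
  have hRM : ∀ ε : ℝ, 0 ≤ ε → ∀ θ : Fin (m+1) → ℝ,
      robustMargin ε x y θ
        = margin (fun i => Fin.tail (x i)) y (Fin.tail θ) + (θ 0 * (r/2) - ε * |θ 0|) := by
    intro ε hε θ
    unfold robustMargin
    have h1 : ∀ i : Fin n,
        (⨅ β : {b : ℝ // |b| ≤ ε}, y i * dot θ (x i + β.1 • (Pi.single 0 1 : Fin (m+1) → ℝ)))
        = y i * dot (Fin.tail θ) (Fin.tail (x i)) + (θ 0 * (r/2) - ε * |θ 0|) := by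
      intro i
      have e1 : ∀ β : {b : ℝ // |b| ≤ ε},
          y i * dot θ (x i + β.1 • (Pi.single 0 1 : Fin (m+1) → ℝ))
            = (y i * dot θ (x i)) + β.1 * (y i * θ 0) := fun β => by
        rw [dot_add_smul_single]; ring
      rw [iInf_congr e1, iInf_beta ε _ _ hε, abs_mul, hy1 i, one_mul,
        dot_decomp θ (x i), hx1 i]
      rcases hy i with h | h <;> rw [h] <;> ring
    rw [iInf_congr h1, fin_ciInf_add_const hn]
    rfl
  -- margin upper bound
  have hmarg_le : ∀ θt : Fin m → ℝ,
      margin (fun i => Fin.tail (x i)) y θt ≤ norm2 θt * γt := by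
    intro θt
    by_cases hτ : norm2 θt = 0
    · have hz : θt = 0 := norm2_eq_zero _ hτ
      rw [hτ, zero_mul, hz]
      have : margin (fun i => Fin.tail (x i)) y (0 : Fin m → ℝ) = ⨅ _ : Fin n, (0:ℝ) := by
        unfold margin; congr 1; funext i; simp [dot]
      rw [this, ciInf_const]
    · have hτpos : 0 < norm2 θt := lt_of_le_of_ne (norm2_nonneg _) (Ne.symm hτ)
      have key : θt = norm2 θt • ((norm2 θt)⁻¹ • θt) := by
        rw [smul_smul, mul_inv_cancel₀ hτ, one_smul]
      calc margin (fun i => Fin.tail (x i)) y θt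
          = norm2 θt * margin (fun i => Fin.tail (x i)) y ((norm2 θt)⁻¹ • θt) := by
            conv_lhs => rw [key]
            exact margin_smul _ _ _ _ (le_of_lt hτpos)
        _ ≤ norm2 θt * γt := by
            apply mul_le_mul_of_nonneg_left _ (le_of_lt hτpos)
            apply hγt.2
            exact ⟨(norm2 θt)⁻¹ • θt, by
              rw [norm2_smul, abs_of_pos (inv_pos.mpr hτpos), inv_mul_cancel₀ hτ], rfl⟩
  -- lower bound on optimal robust margin
  have hstar : M ≤ robustMargin εtr x y θhat := by
    obtain ⟨θts, hθts_norm, hθts_margin⟩ := hγt.1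
    set θstar : Fin (m+1) → ℝ := Fin.cons (u/M) ((γt/M) • θts) with hθstardef
    have hnorm_star : norm2 θstar ≤ 1 := by
      have hsq : (norm2 θstar)^2 ≤ 1 := by
        rw [sq_norm2]
        have : ∑ j, (θstar j)^2 = (u/M)^2 + (γt/M)^2 * ∑ j, (θts j)^2 := by
          rw [Fin.sum_univ_succ]
          simp only [hθstardef, Fin.cons_zero, Fin.cons_succ, Pi.smul_apply, smul_eq_mul,
            mul_pow]
          rw [Finset.mul_sum]
        rw [this]
        have h1 : ∑ j, (θts j)^2 ≤ 1 := by
          rw [← sq_norm2]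
          nlinarith [norm2_nonneg θts]
        have h2 : (γt/M)^2 * ∑ j, (θts j)^2 ≤ (γt/M)^2 := by
          nlinarith [sq_nonneg (γt/M)]
        have h3 : (u/M)^2 + (γt/M)^2 = 1 := by
          field_simp
          linarith [hM2]
        linarith
      nlinarith [norm2_nonneg θstar]
    have hval : robustMargin εtr x y θstar = M := by
      rw [hRM εtr hεtr θstar]
      have h0 : θstar 0 = u/M := rfl
      have ht : Fin.tail θstar = (γt/M) • θts := Fin.tail_cons _ _
      rw [h0, ht, margin_smul _ _ _ _ (by positivity), ← hθts_margin,
        abs_of_pos (by positivity)]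
      have : u/M * (r/2) - εtr * (u/M) = u/M * u := by rw [hudef]; ring
      rw [add_comm, this]
      field_simp
      linarith [hM2]
    calc M = robustMargin εtr x y θstar := hval.symm
      _ ≤ robustMargin εtr x y θhat := hθhat_max θstar hnorm_star
  -- identify θhat
  set a : ℝ := θhat 0 with hadef
  set τ : ℝ := norm2 (Fin.tail θhat) with hτdef
  have hτ_nonneg : 0 ≤ τ := norm2_nonneg _
  have hsum1 : a^2 + τ^2 = 1 := by
    have h1 : (norm2 θhat)^2 = 1 := by rw [hθhat_norm]; norm_num
    rw [sq_norm2] at h1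
    rw [hτdef, sq_norm2]
    rw [Fin.sum_univ_succ] at h1
    simpa [Fin.tail] using h1
  have hchain : robustMargin εtr x y θhat ≤ |a| * u + τ * γt := by
    rw [hRM εtr hεtr θhat]
    have h1 : margin (fun i => Fin.tail (x i)) y (Fin.tail θhat) ≤ τ * γt := hmarg_le _
    have h2 : a * (r/2) - εtr * |a| ≤ |a| * u := by
      have := mul_le_mul_of_nonneg_right (le_abs_self a) (by linarith : (0:ℝ) ≤ r/2)
      rw [hudef]; nlinarith
    linarith
  have hexp : (|a| * M - u)^2 + (τ * M - γt)^2
      = 2*M^2 - 2*M*(|a| * u + τ * γt) := by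
    linear_combination M^2 * hsum1 + M^2 * (sq_abs a) - hM2
  have hCS : |a| * u + τ * γt ≤ M := by
    have h3 : M * (|a| * u + τ * γt) ≤ M * M := by
      nlinarith [sq_nonneg (|a| * M - u), sq_nonneg (τ * M - γt), hexp]
    exact le_of_mul_le_mul_left h3 hM
  have heq : |a| * u + τ * γt = M := le_antisymm hCS (le_trans hstar hchain)
  have hzero : (|a| * M - u)^2 + (τ * M - γt)^2 = 0 := by
    rw [hexp, heq]; ring
  have hx1 : |a| * M - u = 0 := by
    have h2 : (|a| * M - u)^2 = 0 :=
      le_antisymm (by linarith [sq_nonneg (τ * M - γt)]) (sq_nonneg _)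
    exact sq_eq_zero_iff.mp h2
  have hx2 : τ * M - γt = 0 := by
    have h2 : (τ * M - γt)^2 = 0 :=
      le_antisymm (by linarith [sq_nonneg (|a| * M - u)]) (sq_nonneg _)
    exact sq_eq_zero_iff.mp h2
  have habsa : |a| = u / M := by
    field_simp
    linarith
  have hτval : τ = γt / M := by
    field_simp
    linarith
  have haval : a = u / M := by
    have hRMval : robustMargin εtr x y θhat = M := by
      apply le_antisymm _ hstar
      calc robustMargin εtr x y θhat ≤ |a| * u + τ * γt := hchain
        _ = M := heq
    have e1 : a * (r/2) - εtr * |a| = |a| * u := by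
      have h1 : margin (fun i => Fin.tail (x i)) y (Fin.tail θhat) ≤ τ * γt := hmarg_le _
      have h2 : a * (r/2) - εtr * |a| ≤ |a| * u := by
        have := mul_le_mul_of_nonneg_right (le_abs_self a) (by linarith : (0:ℝ) ≤ r/2)
        rw [hudef]; nlinarith
      have h3 := hRM εtr hεtr θhat
      rw [hRMval] at h3
      rw [← hadef] at h3
      -- M = margin + (a*(r/2) - εtr*|a|), margin ≤ τγt, so a*(r/2)-εtr|a| ≥ M - τγt = |a|u
      have h4 : |a| * u ≤ a * (r/2) - εtr * |a| := by
        have h6 : M - τ * γt = |a| * u := by linarith [heq]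
        clear_value u M a τ
        linarith [h3.le, h3.ge, h1, h6]
      linarith
    have h5 : a * (r/2) = |a| * (r/2) := by
      have : |a| * u = |a| * (r/2) - εtr * |a| := by rw [hudef]; ring
      linarith [e1, this]
    have h6 : a = |a| := by
      have hr2 : (0:ℝ) < r/2 := by linarith
      exact mul_right_cancel₀ (ne_of_gt hr2) h5
    rw [h6, habsa]
  have hapos : 0 < a := by rw [haval]; positivity
  -- the tail weights
  set w : Fin m → ℝ := Fin.tail θhat with hwdef
  have hT : ∑ j, (w j)^2 = (γt / M)^2 := by
    rw [← sq_norm2, ← hτdef, hτval]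
  -- rewrite the event
  set c : ℝ := a * (r/2 - εte) with hcdef
  have hc : 0 < c := by
    rw [hcdef]; exact mul_pos hapos (by linarith)
  have hEeq : {p : (Fin (m + 1) → ℝ) × ℝ | 0 < ⨅ β : {b : ℝ // |b| ≤ εte},
        p.2 * dot θhat (p.1 + β.1 • (Pi.single 0 1 : Fin (m + 1) → ℝ))}
      = {p : (Fin (m + 1) → ℝ) × ℝ | 0 < p.2 * dot θhat p.1 - εte * |p.2 * θhat 0|} := by
    ext p
    simp only [Set.mem_setOf_eq]
    have e1 : ∀ β : {b : ℝ // |b| ≤ εte},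
        p.2 * dot θhat (p.1 + β.1 • (Pi.single 0 1 : Fin (m+1) → ℝ))
          = (p.2 * dot θhat p.1) + β.1 * (p.2 * θhat 0) := fun β => by
      rw [dot_add_smul_single]; ring
    rw [iInf_congr e1, iInf_beta εte _ _ hεte]
  rw [hEeq]
  have hfun_meas : Measurable fun p : (Fin (m+1) → ℝ) × ℝ =>
      p.2 * dot θhat p.1 - εte * |p.2 * θhat 0| := by
    have h1 : Measurable fun p : (Fin (m+1) → ℝ) × ℝ => dot θhat p.1 := by
      unfold dot
      exact Finset.measurable_sum _ fun j _ =>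
        ((measurable_pi_apply j).comp measurable_fst).const_mul _
    exact (measurable_snd.mul h1).sub ((measurable_snd.mul_const _).abs.const_mul _)
  have hEmeas : MeasurableSet {p : (Fin (m + 1) → ℝ) × ℝ |
      0 < p.2 * dot θhat p.1 - εte * |p.2 * θhat 0|} :=
    measurableSet_lt measurable_const hfun_meas
  -- measurability of the two injections
  have hf1 : Measurable fun xt : Fin m → ℝ =>
      ((Fin.cons (r / 2) xt : Fin (m + 1) → ℝ), (1 : ℝ)) := by
    refine Measurable.prodMk ?_ measurable_const
    refine measurable_pi_lambda _ fun j => ?_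
    refine Fin.cases ?_ ?_ j
    · simp only [Fin.cons_zero]; exact measurable_const
    · intro i; simp only [Fin.cons_succ]; exact measurable_pi_apply i
  have hf2 : Measurable fun xt : Fin m → ℝ =>
      ((Fin.cons (-(r / 2)) xt : Fin (m + 1) → ℝ), (-1 : ℝ)) := by
    refine Measurable.prodMk ?_ measurable_const
    refine measurable_pi_lambda _ fun j => ?_
    refine Fin.cases ?_ ?_ j
    · simp only [Fin.cons_zero]; exact measurable_const
    · intro i; simp only [Fin.cons_succ]; exact measurable_pi_apply i
  -- compute the two preimages
  have hL : Measurable fun xt : Fin m → ℝ => ∑ j, w j * xt j :=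
    Finset.measurable_sum _ fun j _ => (measurable_pi_apply j).const_mul _
  have hdotcons : ∀ (s : ℝ) (xt : Fin m → ℝ),
      dot θhat (Fin.cons s xt : Fin (m+1) → ℝ) = a * s + ∑ j, w j * xt j := by
    intro s xt
    rw [dot_decomp, Fin.cons_zero, Fin.tail_cons]
    rfl
  have hpre1 : (fun xt : Fin m → ℝ => ((Fin.cons (r / 2) xt : Fin (m + 1) → ℝ), (1 : ℝ))) ⁻¹'
        {p : (Fin (m + 1) → ℝ) × ℝ | 0 < p.2 * dot θhat p.1 - εte * |p.2 * θhat 0|}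
      = (fun xt : Fin m → ℝ => ∑ j, w j * xt j) ⁻¹' (Set.Ioi (-c)) := by
    ext xt
    simp only [Set.mem_preimage, Set.mem_setOf_eq, Set.mem_Ioi, one_mul, hdotcons]
    rw [abs_of_pos hapos]
    constructor <;> intro h
    · rw [hcdef]; nlinarith
    · rw [hcdef] at h; nlinarith
  have hpre2 : (fun xt : Fin m → ℝ => ((Fin.cons (-(r / 2)) xt : Fin (m + 1) → ℝ), (-1 : ℝ))) ⁻¹'
        {p : (Fin (m + 1) → ℝ) × ℝ | 0 < p.2 * dot θhat p.1 - εte * |p.2 * θhat 0|}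
      = (fun xt : Fin m → ℝ => ∑ j, w j * xt j) ⁻¹' (Set.Iio c) := by
    ext xt
    simp only [Set.mem_preimage, Set.mem_setOf_eq, Set.mem_Iio, neg_one_mul, hdotcons]
    rw [abs_neg, abs_of_pos hapos]
    constructor <;> intro h
    · rw [hcdef]; nlinarith
    · rw [hcdef] at h; nlinarith
  -- the distribution of the linear functional
  set V : NNReal := Real.toNNReal (σ^2 * ∑ j, (w j)^2) with hVdef
  have hVne : V ≠ 0 := by
    rw [hVdef, hT]
    have : 0 < σ^2 * (γt/M)^2 := by positivity
    simp [Real.toNNReal_eq_zero, not_le.mpr this]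
  have hmapL : (gaussPi m σ).map (fun xt => ∑ j, w j * xt j) = gaussianReal 0 V :=
    gaussPi_map_linear σ m w
  -- symmetry : measure of Ioi (-c) equals measure of Iio c
  have hneg : (gaussianReal 0 V).map (fun x : ℝ => -x) = gaussianReal 0 V := by
    have h := gaussianReal_map_const_mul (μ := 0) (v := V) (-1)
    have h2 : (fun x : ℝ => (-1) * x) = fun x : ℝ => -x := by funext z; ring
    rw [h2] at h
    rw [h]
    congr 1
    · ring
    · apply NNReal.coe_injective; push_cast; ring
  have hsym : gaussianReal 0 V (Set.Ioi (-c)) = gaussianReal 0 V (Set.Iio c) := by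
    conv_lhs => rw [← hneg]
    rw [Measure.map_apply measurable_neg measurableSet_Ioi]
    congr 1
    ext z
    simp only [Set.mem_preimage, Set.mem_Ioi, Set.mem_Iio]
    constructor <;> intro h <;> linarith
  have hsingle : gaussianReal 0 V {c} = 0 :=
    gaussianReal_absolutelyContinuous _ hVne Real.volume_singleton
  have hIioIic : gaussianReal 0 V (Set.Iio c) = gaussianReal 0 V (Set.Iic c) := by
    refine le_antisymm (measure_mono Set.Iio_subset_Iic_self) ?_
    rw [← Set.Iio_union_right]
    refine (measure_union_le _ _).trans ?_
    rw [hsingle, add_zero]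
  -- compute the measure
  have hPdist : Pdist m r σ {p : (Fin (m + 1) → ℝ) × ℝ |
        0 < p.2 * dot θhat p.1 - εte * |p.2 * θhat 0|}
      = gaussianReal 0 V (Set.Iic c) := by
    simp only [Pdist, Measure.add_apply, Measure.smul_apply, smul_eq_mul]
    rw [Measure.map_apply hf1 hEmeas, Measure.map_apply hf2 hEmeas, hpre1, hpre2,
      ← Measure.map_apply hL measurableSet_Ioi, ← Measure.map_apply hL measurableSet_Iio,
      hmapL, hsym, hIioIic, ← add_mul, ENNReal.inv_two_add_inv_two, one_mul]
  rw [hPdist]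
  -- scaling to the standard gaussian
  set s0 : ℝ := σ * (γt / M) with hs0def
  have hs0 : 0 < s0 := by positivity
  have hmapstd : (gaussianReal 0 1).map (fun z : ℝ => s0 * z) = gaussianReal 0 V := by
    have h := gaussianReal_map_const_mul (μ := 0) (v := 1) s0
    rw [h]
    congr 1
    · ring
    · apply NNReal.coe_injective
      push_cast
      rw [hVdef, hT, Real.coe_toNNReal _ (by positivity), hs0def]
      ring
  have hfinal : gaussianReal 0 V (Set.Iic c) = gaussianReal 0 1 (Set.Iic (c / s0)) := by
    rw [← hmapstd, Measure.map_apply (by fun_prop) measurableSet_Iic]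
    congr 1
    ext z
    simp only [Set.mem_preimage, Set.mem_Iic]
    rw [← le_div_iff₀' hs0]
  rw [hfinal]
  have harg : c / s0 = r * (r - 2 * εte) / (4 * σ * γt)
      - εtr * (r - 2 * εte) / (2 * σ * γt) := by
    rw [hcdef, haval, hs0def, hudef]
    have hMne : M ≠ 0 := ne_of_gt hM
    field_simp
    ring
  rw [stdGaussianCDF, ← harg]
end
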